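/- Let R be a commutative Noetherian ring of prime characteristic p with the following property: for each minimal prime P of R, the quotient ring R/P admits a module-finite integral extension domain S in which tight closure commutes with localization. Then tight closure commutes with localization in R; that is, for every ideal I of R and every multiplicative set U of R, the extension I*·R[U⁻¹] of the tight closure of I equals the tight closure (I·R[U⁻¹])* of the extended ideal. -/

import Mathlib

/-- The `q`-th Frobenius power `I^{[q]}` of an ideal `I`: the ideal generated by
`q`-th powers of elements of `I`. -/
def Ideal.frobeniusPower {R : Type*} [CommRing R] (I : Ideal R) (q : ℕ) : Ideal R :=
  Ideal.span ((fun x => x ^ q) '' (I : Set R))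

/-- `R°`: the set of elements of `R` not contained in any minimal prime of `R`. -/
def primeComplement (R : Type*) [CommRing R] : Set R :=
  { c | ∀ P ∈ minimalPrimes R, c ∉ P }

/-- The tight closure `I*` of an ideal `I` in a ring of characteristic `p`:
elements `z` such that `c * z ^ (p ^ e) ∈ I ^ [p ^ e]` for some `c ∈ R°`
and all sufficiently large `e`. -/
def tightClosure (p : ℕ) {R : Type*} [CommRing R] (I : Ideal R) : Set R :=
  { z | ∃ c ∈ primeComplement R, ∃ N : ℕ, ∀ e : ℕ, N ≤ e →
      c * z ^ p ^ e ∈ I.frobeniusPower (p ^ e) }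

/-- Tight closure commutes with localization in `R`: for every ideal `I` and
multiplicative set `U`, `I* · R[U⁻¹] = (I · R[U⁻¹])*`. -/
def TightClosureCommutesWithLocalization (p : ℕ) (R : Type*) [CommRing R] : Prop :=
  ∀ (I : Ideal R) (U : Submonoid R),
    (Ideal.map (algebraMap R (Localization U)) (Ideal.span (tightClosure p I)) :
        Set (Localization U))
      = tightClosure p (Ideal.map (algebraMap R (Localization U)) I)

/-- A ring is F-regular if every ideal is tightly closed, both in the ring itself
and in all of its localizations. -/
def FRegular (p : ℕ) (S : Type*) [CommRing S] : Prop :=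
  (∀ I : Ideal S, tightClosure p I = (I : Set S)) ∧
    ∀ (U : Submonoid S) (J : Ideal (Localization U)),
      tightClosure p J = (J : Set (Localization U))

open Ideal

variable {A B : Type*} [CommRing A] [CommRing B] {p : ℕ}

section Frob

lemma pow_mem_frob {I : Ideal A} {x : A} (hx : x ∈ I) (q : ℕ) :
    x ^ q ∈ I.frobeniusPower q :=
  Ideal.subset_span ⟨x, hx, rfl⟩

/-- no char needed -/
lemma map_frob_le (f : A →+* B) (I : Ideal A) (q : ℕ) :
    Ideal.map f (I.frobeniusPower q) ≤ (Ideal.map f I).frobeniusPower q := by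
  rw [Ideal.frobeniusPower, Ideal.map_span]
  refine Ideal.span_le.2 ?_
  rintro _ ⟨_, ⟨x, hx, rfl⟩, rfl⟩
  rw [map_pow]
  exact pow_mem_frob (Ideal.mem_map_of_mem f hx) q

/-- freshman's dream, from `(p : A) = 0` with `p` prime. -/
lemma freshman (hp : p.Prime) (hch : (p : A) = 0) (a b : A) (e : ℕ) :
    (a + b) ^ p ^ e = a ^ p ^ e + b ^ p ^ e := by
  rcases subsingleton_or_nontrivial A with hs | hn
  · exact Subsingleton.elim _ _
  · have h1 : ringChar A ∣ p := ringChar.dvd hch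
    have h2 : ringChar A = 1 ∨ ringChar A = p := (Nat.Prime.eq_one_or_self_of_dvd hp _ h1).imp id id
    have h3 : ringChar A ≠ 1 := CharP.ringChar_ne_one
    have h4 : ringChar A = p := h2.resolve_left h3
    haveI : CharP A p := h4 ▸ ringChar.charP A
    haveI : Fact p.Prime := ⟨hp⟩
    exact add_pow_char_pow a b p e

lemma frob_span_le (hp : p.Prime) (hch : (p : A) = 0) (T : Set A) (e : ℕ) :
    (Ideal.span T).frobeniusPower (p ^ e) ≤ Ideal.span ((fun x => x ^ p ^ e) '' T) := by
  refine Ideal.span_le.2 ?_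
  rintro _ ⟨x, hx, rfl⟩
  have hq : 0 < p ^ e := Nat.pow_pos hp.pos
  show x ^ p ^ e ∈ Ideal.span ((fun x => x ^ p ^ e) '' T)
  refine Submodule.span_induction (p := fun z _ => z ^ p ^ e ∈ Ideal.span ((fun x => x ^ p ^ e) '' T))
    ?_ ?_ ?_ ?_ hx
  · intro z hz; exact Ideal.subset_span ⟨z, hz, rfl⟩
  · show (0 : A) ^ p ^ e ∈ _
    rw [zero_pow hq.ne']; exact zero_mem _
  · intro x y _ _ hx hy
    show (x + y) ^ p ^ e ∈ _
    rw [freshman hp hch x y e]; exact add_mem hx hy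
  · intro a x _ hx
    show (a • x) ^ p ^ e ∈ _
    rw [smul_eq_mul, mul_pow]
    exact Ideal.mul_mem_left _ _ hx

lemma frob_map_eq (hp : p.Prime) (hchB : (p : B) = 0) (f : A →+* B) (I : Ideal A) (e : ℕ) :
    (Ideal.map f I).frobeniusPower (p ^ e) = Ideal.map f (I.frobeniusPower (p ^ e)) := by
  refine le_antisymm ?_ (map_frob_le f I _)
  have h := frob_span_le hp hchB (f '' (I : Set A)) e
  refine le_trans (by exact h) ?_
  rw [Ideal.frobeniusPower, Ideal.map_span]
  refine Ideal.span_le.2 ?_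
  rintro _ ⟨_, ⟨x, hx, rfl⟩, rfl⟩
  exact Ideal.subset_span ⟨x ^ p ^ e, ⟨x, hx, rfl⟩, by simp⟩

lemma frob_frob_le (hp : p.Prime) (hch : (p : A) = 0) (I : Ideal A) (a b : ℕ) :
    (I.frobeniusPower (p ^ a)).frobeniusPower (p ^ b) ≤ I.frobeniusPower (p ^ (a + b)) := by
  have h := frob_span_le hp hch ((fun x => x ^ p ^ a) '' (I : Set A)) b
  refine le_trans (by exact h) ?_
  refine Ideal.span_le.2 ?_
  rintro _ ⟨_, ⟨x, hx, rfl⟩, rfl⟩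
  show (x ^ p ^ a) ^ p ^ b ∈ _
  rw [← pow_mul, ← pow_add]
  exact pow_mem_frob hx _

lemma frob_sup_le (hp : p.Prime) (hch : (p : A) = 0) (I J : Ideal A) (e : ℕ) :
    (I ⊔ J).frobeniusPower (p ^ e) ≤ I.frobeniusPower (p ^ e) ⊔ J.frobeniusPower (p ^ e) := by
  refine Ideal.span_le.2 ?_
  rintro _ ⟨x, hx, rfl⟩
  have hx' : x ∈ I ⊔ J := hx
  rw [Submodule.mem_sup] at hx'
  obtain ⟨a, ha, b, hb, rfl⟩ := hx'
  show (a + b) ^ p ^ e ∈ _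
  rw [freshman hp hch a b e]
  exact Submodule.add_mem_sup (pow_mem_frob ha _) (pow_mem_frob hb _)

lemma frob_le_pow (I : Ideal A) (q : ℕ) : I.frobeniusPower q ≤ I ^ q := by
  refine Ideal.span_le.2 ?_
  rintro _ ⟨x, hx, rfl⟩
  exact Ideal.pow_mem_pow hx q

end Frob
section PC

lemma one_mem_pc : (1 : A) ∈ primeComplement A := by
  intro P hP
  haveI := hP.1.1
  exact P.primeCompl.one_mem

lemma mul_mem_pc {c d : A} (hc : c ∈ primeComplement A) (hd : d ∈ primeComplement A) :
    c * d ∈ primeComplement A := by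
  intro P hP hmem
  rcases (Ideal.IsPrime.mem_or_mem hP.1.1 hmem) with h | h
  · exact hc P hP h
  · exact hd P hP h

lemma pow_mem_pc {c : A} (hc : c ∈ primeComplement A) (n : ℕ) :
    c ^ n ∈ primeComplement A := by
  induction n with
  | zero => simpa using one_mem_pc
  | succ n ih => rw [pow_succ]; exact mul_mem_pc ih hc

lemma minimalPrimes_domain [IsDomain A] : minimalPrimes A = {⊥} := by
  ext P
  simp only [Set.mem_singleton_iff]
  constructor
  · rintro ⟨⟨hP, -⟩, hmin⟩
    have := hmin (y := ⊥) ⟨Ideal.bot_prime, le_rfl⟩ bot_le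
    exact le_antisymm this bot_le
  · rintro rfl
    exact ⟨⟨Ideal.bot_prime, le_rfl⟩, fun J hJ hle => bot_le⟩

lemma pc_domain [IsDomain A] : primeComplement A = {x : A | x ≠ 0} := by
  rw [primeComplement]
  ext x
  simp only [minimalPrimes_domain, Set.mem_singleton_iff, Set.mem_setOf_eq]
  constructor
  · intro h hx
    exact h ⊥ rfl (by simp [hx])
  · rintro hx P rfl hP
    exact hx (by simpa using hP)

end PC
section TC

lemma tc_zero (hp : p.Prime) (I : Ideal A) : (0 : A) ∈ tightClosure p I := by
  refine ⟨1, one_mem_pc, 0, fun e _ => ?_⟩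
  have hq : p ^ e ≠ 0 := (Nat.pow_pos hp.pos).ne'
  rw [zero_pow hq, mul_zero]
  exact zero_mem _

lemma tc_add (hp : p.Prime) (hch : (p : A) = 0) {I : Ideal A} {z w : A} (hz : z ∈ tightClosure p I) (hw : w ∈ tightClosure p I) :
    z + w ∈ tightClosure p I := by
  obtain ⟨c, hc, N, hN⟩ := hz
  obtain ⟨d, hd, M, hM⟩ := hw
  refine ⟨c * d, mul_mem_pc hc hd, max N M, fun e he => ?_⟩
  rw [freshman hp hch z w e, mul_add]
  have h1 : c * d * z ^ p ^ e = d * (c * z ^ p ^ e) := by ring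
  have h2 : c * d * w ^ p ^ e = c * (d * w ^ p ^ e) := by ring
  rw [h1, h2]
  exact add_mem (Ideal.mul_mem_left _ _ (hN e (le_of_max_le_left he)))
    (Ideal.mul_mem_left _ _ (hM e (le_of_max_le_right he)))

lemma tc_smul {I : Ideal A} {z : A} (r : A) (hz : z ∈ tightClosure p I) :
    r * z ∈ tightClosure p I := by
  obtain ⟨c, hc, N, hN⟩ := hz
  refine ⟨c, hc, N, fun e he => ?_⟩
  have h1 : c * (r * z) ^ p ^ e = r ^ p ^ e * (c * z ^ p ^ e) := by ring
  rw [h1]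
  exact Ideal.mul_mem_left _ _ (hN e he)

lemma tc_span (hp : p.Prime) (hch : (p : A) = 0) (I : Ideal A) :
    (Ideal.span (tightClosure p I) : Set A) = tightClosure p I := by
  refine Set.Subset.antisymm ?_ Ideal.subset_span
  intro x hx
  refine Submodule.span_induction (p := fun z _ => z ∈ tightClosure p I) (fun z hz => hz)
    (tc_zero hp I) (fun a b _ _ ha hb => tc_add hp hch ha hb)
    (fun r a _ ha => tc_smul r ha) hx

/-- Persistence of tight closure along a ring map carrying `R°` into `S°`. -/
lemma tc_map (f : A →+* B) (hf : ∀ c ∈ primeComplement A, f c ∈ primeComplement B)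
    {I : Ideal A} {z : A} (hz : z ∈ tightClosure p I) :
    f z ∈ tightClosure p (Ideal.map f I) := by
  obtain ⟨c, hc, N, hN⟩ := hz
  refine ⟨f c, hf c hc, N, fun e he => ?_⟩
  rw [← map_pow, ← _root_.map_mul]
  exact map_frob_le f I (p ^ e) (Ideal.mem_map_of_mem f (hN e he))

end TC
section Loc

variable {R : Type*} [CommRing R] (U : Submonoid R)

local notation "L" => Localization U
local notation "φ" => algebraMap R (Localization U)

/-- A minimal prime of `R` disjoint from `U` maps to a minimal prime of the localization. -/
lemma map_minimalPrime {P : Ideal R} (hP : P ∈ minimalPrimes R)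
    (hdisj : Disjoint (U : Set R) (P : Set R)) :
    Ideal.map φ P ∈ minimalPrimes L := by
  have hPp : P.IsPrime := hP.1.1
  have hprime : (Ideal.map φ P).IsPrime :=
    IsLocalization.isPrime_of_isPrime_disjoint U L P hPp hdisj
  refine ⟨⟨hprime, bot_le⟩, ?_⟩
  rintro J ⟨hJp, -⟩ hle
  have hQ : (Ideal.comap φ J).IsPrime := hJp.comap φ
  have hcom : Ideal.comap φ J ≤ P := by
    have := Ideal.comap_mono (f := φ) hle
    rwa [(show Ideal.comap φ (Ideal.map φ P) = P from
      IsLocalization.comap_map_of_isPrime_disjoint U L hPp hdisj)] at this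
  have hPle : P ≤ Ideal.comap φ J := hP.2 ⟨hQ, bot_le⟩ hcom
  calc Ideal.map φ P ≤ Ideal.map φ (Ideal.comap φ J) := Ideal.map_mono hPle
    _ ≤ J := Ideal.map_comap_le

/-- Minimal primes of the localization contract to minimal primes of `R`. -/
lemma comap_minimalPrime {P' : Ideal L} (hP' : P' ∈ minimalPrimes L) :
    Ideal.comap φ P' ∈ minimalPrimes R := by
  have hP'p : P'.IsPrime := hP'.1.1
  have hQ : (Ideal.comap φ P').IsPrime := hP'p.comap φ
  obtain ⟨P₀, hP₀, hle⟩ := Ideal.exists_minimalPrimes_le (I := ⊥) (J := Ideal.comap φ P')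
    (by exact bot_le)
  have hP₀p : P₀.IsPrime := hP₀.1.1
  have hdisj : Disjoint (U : Set R) (P₀ : Set R) := by
    rw [Set.disjoint_iff_inter_eq_empty]
    by_contra hne
    obtain ⟨u, huU, huP⟩ := Set.nonempty_iff_ne_empty.2 hne
    have : φ u ∈ P' := hle huP
    exact hP'p.ne_top (P'.eq_top_of_isUnit_mem this (IsLocalization.map_units L ⟨u, huU⟩))
  have hmaple : Ideal.map φ P₀ ≤ P' := by
    refine le_trans (Ideal.map_mono hle) Ideal.map_comap_le
  have hmapmin : Ideal.map φ P₀ ∈ minimalPrimes L := map_minimalPrime U hP₀ hdisj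
  have hprime : (Ideal.map φ P₀).IsPrime :=
    IsLocalization.isPrime_of_isPrime_disjoint U L P₀ hP₀p hdisj
  have heq : P' = Ideal.map φ P₀ :=
    le_antisymm (hP'.2 ⟨hprime, bot_le⟩ hmaple) hmaple
  rw [heq, (show Ideal.comap φ (Ideal.map φ P₀) = P₀ from
    IsLocalization.comap_map_of_isPrime_disjoint U L hP₀p hdisj)]
  exact hP₀

lemma pc_map_pc {c : R} (hc : c ∈ primeComplement R) : φ c ∈ primeComplement L := by
  intro P' hP' hmem
  exact hc _ (comap_minimalPrime U hP') hmem

/-- Elementwise membership in an extended ideal. -/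
lemma mem_map_loc {J : Ideal R} {x : R} (hx : φ x ∈ Ideal.map φ J) :
    ∃ u ∈ U, u * x ∈ J := by
  rw [IsLocalization.mem_map_algebraMap_iff U L] at hx
  obtain ⟨⟨⟨j, hj⟩, u⟩, hxu⟩ := hx
  rw [← _root_.map_mul, ← sub_eq_zero, ← map_sub, IsLocalization.map_eq_zero_iff U L] at hxu
  obtain ⟨m, hm⟩ := hxu
  refine ⟨m * u, U.mul_mem m.2 u.2, ?_⟩
  have : (m : R) * (x * u - j) = 0 := hm
  have h2 : (m : R) * u * x = m * j := by linear_combination this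
  rw [h2]
  exact J.mul_mem_left _ hj

end Loc
section IntDiv

open Polynomial

/-- If `d ≠ 0` is integral over the image of `f : D →+* S` (domains), then some nonzero
element of `D` maps into `d * S`. -/
lemma exists_dvd_of_integral {D S : Type*} [CommRing D] [CommRing S] [IsDomain D] [IsDomain S]
    (f : D →+* S) {d : S} (hd : d ≠ 0) (hint : f.IsIntegralElem d) :
    ∃ r : D, r ≠ 0 ∧ ∃ s : S, f r = d * s := by
  obtain ⟨P₀, hmonic₀, heval₀⟩ := hint
  suffices H : ∀ n : ℕ, ∀ P : D[X], P.Monic → eval₂ f d P = 0 → P.natDegree = n →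
      ∃ r : D, r ≠ 0 ∧ ∃ s : S, f r = d * s by
    exact H P₀.natDegree P₀ hmonic₀ heval₀ rfl
  intro n
  induction n using Nat.strong_induction_on with
  | _ n ih =>
    intro P hmonic heval hn
    subst hn
    by_cases h0 : P.coeff 0 = 0
    · have hP : P.divX * X = P := by
        have := P.divX_mul_X_add
        rwa [h0, map_zero, add_zero] at this
      have hdeg : 0 < P.natDegree := by
        rcases Nat.eq_zero_or_pos P.natDegree with h | h
        · exfalso
          have heq : P = 1 := Polynomial.Monic.natDegree_eq_zero hmonic |>.1 h
          rw [heq] at h0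
          simp at h0
        · exact h
      have hmonic' : P.divX.Monic := by
        have hm := hmonic
        rw [Polynomial.Monic] at hm ⊢
        rwa [← hP, leadingCoeff_mul_X] at hm
      have heval' : eval₂ f d P.divX = 0 := by
        have h2 : eval₂ f d (P.divX * X) = 0 := by rw [hP]; exact heval
        rw [eval₂_mul, eval₂_X] at h2
        rcases mul_eq_zero.1 h2 with h | h
        · exact h
        · exact absurd h hd
      have hdeg' : P.divX.natDegree < P.natDegree := by
        conv_rhs => rw [← hP]
        rw [natDegree_mul hmonic'.ne_zero X_ne_zero, natDegree_X]
        omega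
      exact ih P.divX.natDegree hdeg' P.divX hmonic' heval' rfl
    · refine ⟨P.coeff 0, h0, -(eval₂ f d P.divX), ?_⟩
      have h1 := P.divX_mul_X_add
      have h2 : eval₂ f d (P.divX * X + C (P.coeff 0)) = 0 := by rw [h1]; exact heval
      rw [eval₂_add, eval₂_mul, eval₂_X, eval₂_C] at h2
      have h3 : f (P.coeff 0) = -(eval₂ f d P.divX * d) := by linear_combination h2
      rw [h3]; ring

end IntDiv
section Functional

open Submodule

variable {D S : Type*} [CommRing D] [CommRing S] [IsDomain D] [IsDomain S]
  [IsNoetherianRing D] [Algebra D S] [Module.Finite D S]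

/-- Over a Noetherian domain `D`, a module-finite domain extension `S` admits a
`D`-linear functional `φ : S → D` with `φ 1 ≠ 0`. -/
lemma exists_functional (hinj : Function.Injective (algebraMap D S)) :
    ∃ φ : S →ₗ[D] D, φ 1 ≠ 0 := by
  classical
  haveI : IsNoetherian D S := isNoetherian_of_isNoetherianRing_of_finite D S
  have hsmul_one : ∀ b : D, b • (1 : S) = algebraMap D S b := fun b => by
    rw [Algebra.smul_def, mul_one]
  have hsmul_zero : ∀ b : D, b • (1 : S) = 0 → b = 0 := fun b hb => by
    rw [hsmul_one] at hb
    exact hinj (by rwa [map_zero])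
  -- maximal submodule meeting D·1 trivially
  set one : Submodule D S := Submodule.span D {1} with hone
  have h1mem : (1 : S) ∈ one := Submodule.subset_span rfl
  obtain ⟨N, hNmem, hNmax⟩ :=
    (set_has_maximal_iff_noetherian.2 inferInstance)
      {N : Submodule D S | N ⊓ one = ⊥} ⟨⊥, by simp⟩
  have key1 : ∀ b : D, b • (1 : S) ∈ N → b = 0 := by
    intro b hb
    have : b • (1 : S) ∈ N ⊓ one := ⟨hb, Submodule.smul_mem _ _ h1mem⟩
    rw [hNmem] at this
    exact hsmul_zero b (by simpa using this)
  have key2 : ∀ a : D, a ≠ 0 → ∀ s : S, a • s ∈ N → s ∈ N := by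
    intro a ha s hs
    set N' : Submodule D S := N.comap (a • (LinearMap.id : S →ₗ[D] S)) with hN'
    have hmem' : N' ⊓ one = ⊥ := by
      rw [eq_bot_iff]
      rintro x ⟨hx1, hx2⟩
      obtain ⟨b, rfl⟩ := Submodule.mem_span_singleton.1 hx2
      have : a • (b • (1 : S)) ∈ N := hx1
      rw [smul_smul] at this
      have hab : a * b = 0 := key1 _ this
      have hb : b = 0 := by
        rcases mul_eq_zero.1 hab with h | h
        · exact absurd h ha
        · exact h
      simp [hb]
    have hle : N ≤ N' := fun x hx => N.smul_mem a hx
    have : ¬ N < N' := hNmax N' hmem'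
    have heq : N' = N := le_antisymm (by by_contra hcon; exact this (lt_of_le_of_ne hle (by intro h; exact hcon (le_of_eq h.symm)))) hle
    rw [← heq]
    exact hs
  have key3 : ∀ s : S, ∃ a b : D, a ≠ 0 ∧ a • s - b • (1 : S) ∈ N := by
    intro s
    by_cases hs : (N ⊔ Submodule.span D {s}) ⊓ one = ⊥
    · have : ¬ N < N ⊔ Submodule.span D {s} := hNmax _ hs
      have hle : N ⊔ Submodule.span D {s} ≤ N := by
        by_contra hcon
        exact this (lt_of_le_of_ne le_sup_left (by intro h; exact hcon (le_of_eq h.symm)))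
      have hsN : s ∈ N := hle (Submodule.mem_sup_right (Submodule.mem_span_singleton_self s))
      exact ⟨1, 0, one_ne_zero, by simpa using hsN⟩
    · obtain ⟨x, hx, hxne⟩ := Submodule.exists_mem_ne_zero_of_ne_bot hs
      obtain ⟨hx1, hx2⟩ := hx
      obtain ⟨b, rfl⟩ := Submodule.mem_span_singleton.1 hx2
      have hx1' : b • (1:S) ∈ N ⊔ Submodule.span D {s} := hx1
      rw [Submodule.mem_sup] at hx1'
      obtain ⟨n, hn, y, hy, hxeq⟩ := hx1'
      obtain ⟨a, rfl⟩ := Submodule.mem_span_singleton.1 hy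
      have ha : a ≠ 0 := by
        rintro rfl
        apply hxne
        have : b • (1 : S) ∈ N ⊓ one := by
          constructor
          · rw [← hxeq]; simpa using hn
          · exact Submodule.smul_mem _ _ h1mem
        rw [hNmem] at this
        simpa using this
      refine ⟨a, b, ha, ?_⟩
      have : a • s - b • (1:S) = -n := by rw [← hxeq]; abel
      rw [this]
      exact N.neg_mem hn
  -- pass to the quotient M = S / N
  set M := S ⧸ N with hM
  set π : S →ₗ[D] M := N.mkQ with hπ
  set ι : M := π 1 with hι
  have hι_tf : ∀ c : D, c • ι = 0 → c = 0 := by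
    intro c hc
    rw [hι, ← map_smul, Submodule.mkQ_apply, Submodule.Quotient.mk_eq_zero] at hc
    exact key1 c hc
  have key3' : ∀ m : M, ∃ a b : D, a ≠ 0 ∧ a • m = b • ι := by
    intro m
    obtain ⟨s, rfl⟩ := N.mkQ_surjective m
    obtain ⟨a, b, ha, hab⟩ := key3 s
    refine ⟨a, b, ha, ?_⟩
    rw [hι, ← map_smul, ← map_smul, ← sub_eq_zero, ← map_sub, Submodule.mkQ_apply,
      Submodule.Quotient.mk_eq_zero]
    exact hab
  choose af bf haf hab using key3'
  have uniq : ∀ (a b : D) (m : M), a ≠ 0 → a • m = b • ι → af m * b = a * bf m := by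
    intro a b m ha habm
    have h1 : (a * bf m) • ι = (af m * b) • ι := by
      rw [mul_smul, mul_smul, ← hab m, smul_comm, habm, smul_comm]
    have h2 : (af m * b - a * bf m) • ι = 0 := by
      rw [sub_smul, h1, sub_self]
    exact sub_eq_zero.1 (hι_tf _ h2)
  -- the fraction-valued functional
  set K := FractionRing D with hK
  have hKinj : Function.Injective (algebraMap D K) := IsFractionRing.injective D K
  have hne : ∀ a : D, a ≠ 0 → algebraMap D K a ≠ 0 := fun a ha h =>
    ha (hKinj (by rwa [map_zero]))
  set ψ₀ : M → K := fun m => algebraMap D K (bf m) / algebraMap D K (af m) with hψ₀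
  have ψ₀_spec : ∀ (a b : D) (m : M), a ≠ 0 → a • m = b • ι →
      ψ₀ m = algebraMap D K b / algebraMap D K a := by
    intro a b m ha habm
    have h := uniq a b m ha habm
    rw [hψ₀]
    rw [div_eq_div_iff (hne _ (haf m)) (hne _ ha), ← _root_.map_mul, ← _root_.map_mul]
    exact congrArg _ (by linear_combination -h)
  have ψ₀_add : ∀ m m' : M, ψ₀ (m + m') = ψ₀ m + ψ₀ m' := by
    intro m m'
    have ha : af m * af m' ≠ 0 := mul_ne_zero (haf m) (haf m')
    have habm : (af m * af m') • (m + m') = (af m' * bf m + af m * bf m') • ι := by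
      have e1 : (af m * af m') • m = af m' • (bf m • ι) := by
        rw [mul_comm, mul_smul, hab m]
      have e2 : (af m * af m') • m' = af m • (bf m' • ι) := by
        rw [mul_smul, hab m']
      rw [smul_add, e1, e2, smul_smul, smul_smul, ← add_smul]
    rw [ψ₀_spec _ _ _ ha habm, hψ₀]
    rw [div_add_div _ _ (hne _ (haf m)) (hne _ (haf m')), map_add, _root_.map_mul,
      _root_.map_mul, _root_.map_mul]
    ring
  have ψ₀_smul : ∀ (r : D) (m : M), ψ₀ (r • m) = algebraMap D K r * ψ₀ m := by
    intro r m
    have habm : af m • (r • m) = (r * bf m) • ι := by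
      rw [smul_comm, hab m, mul_smul]
    rw [ψ₀_spec _ _ _ (haf m) habm, hψ₀, _root_.map_mul]
    ring
  set ψ : M →ₗ[D] K :=
    { toFun := ψ₀
      map_add' := ψ₀_add
      map_smul' := fun r m => by
        simp only [RingHom.id_apply]
        rw [ψ₀_smul r m, Algebra.smul_def] } with hψ
  have ψι : ψ ι = 1 := by
    show ψ₀ ι = 1
    have : (1 : D) • ι = (1 : D) • ι := rfl
    rw [ψ₀_spec 1 1 ι one_ne_zero this, map_one, div_one]
  -- clear denominators
  haveI : Module.Finite D M := Module.Finite.of_surjective π N.mkQ_surjective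
  obtain ⟨n, g, hg⟩ := Module.Finite.exists_fin (R := D) (M := M)
  classical
  set t : D := ∏ i : Fin n, af (g i) with ht
  have htne : t ≠ 0 := Finset.prod_ne_zero_iff.2 fun i _ => haf (g i)
  have hrange : ∀ m : M, algebraMap D K t * ψ m ∈ LinearMap.range (Algebra.linearMap D K) := by
    intro m
    have hm : m ∈ Submodule.span D (Set.range g) := hg ▸ Submodule.mem_top
    refine Submodule.span_induction ?_ ?_ ?_ ?_ hm
    · rintro _ ⟨i, rfl⟩
      have hsplit : t = af (g i) * ∏ j ∈ Finset.univ.erase i, af (g j) :=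
        (Finset.mul_prod_erase Finset.univ (fun j => af (g j)) (Finset.mem_univ i)).symm
      refine ⟨(∏ j ∈ Finset.univ.erase i, af (g j)) * bf (g i), ?_⟩
      have hψgi : ψ (g i) = algebraMap D K (bf (g i)) / algebraMap D K (af (g i)) := rfl
      rw [Algebra.linearMap_apply, hψgi, hsplit, _root_.map_mul, _root_.map_mul]
      rw [mul_assoc, mul_comm ((algebraMap D K) (af (g i))), mul_assoc,
        div_mul_cancel₀ _ (hne _ (haf (g i)))]
    · exact ⟨0, by simp⟩
    · rintro x y _ _ ⟨u, hu⟩ ⟨v, hv⟩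
      exact ⟨u + v, by rw [map_add, map_add, hu, hv]; ring⟩
    · rintro r x _ ⟨u, hu⟩
      refine ⟨r * u, ?_⟩
      rw [Algebra.linearMap_apply] at hu
      rw [Algebra.linearMap_apply, _root_.map_mul, hu, LinearMap.map_smul, Algebra.smul_def]
      ring
  set φ' : S →ₗ[D] K := t • (ψ.comp π) with hφ'
  have hφ'range : ∀ x : S, φ' x ∈ LinearMap.range (Algebra.linearMap D K) := by
    intro x
    have : φ' x = algebraMap D K t * ψ (π x) := by
      rw [hφ', LinearMap.smul_apply, LinearMap.comp_apply, Algebra.smul_def]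
    rw [this]
    exact hrange (π x)
  set eφ : D ≃ₗ[D] LinearMap.range (Algebra.linearMap D K) :=
    LinearEquiv.ofInjective (Algebra.linearMap D K) hKinj with heφ
  refine ⟨eφ.symm.toLinearMap.comp (φ'.codRestrict _ hφ'range), ?_⟩
  have hval : φ' 1 = algebraMap D K t := by
    rw [hφ', LinearMap.smul_apply, LinearMap.comp_apply]
    show t • ψ (π 1) = _
    rw [← hι, ψι, Algebra.smul_def, mul_one]
  intro hcon
  have hrescod : (φ'.codRestrict _ hφ'range) 1 = eφ t := by
    apply Subtype.ext
    show φ' 1 = _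
    rw [hval]; rfl
  rw [LinearMap.comp_apply, hrescod] at hcon
  have : eφ.symm (eφ t) = 0 := hcon
  rw [LinearEquiv.symm_apply_apply] at this
  exact htne this

end Functional
section Descent

lemma functional_map_mem {D S : Type*} [CommRing D] [CommRing S] [Algebra D S]
    (φ : S →ₗ[D] D) (J : Ideal D) {x : S} (hx : x ∈ Ideal.map (algebraMap D S) J) :
    φ x ∈ J := by
  have hsub : (Ideal.map (algebraMap D S) J : Set S) ⊆ (J • (⊤ : Submodule D S) : Submodule D S) := by
    intro x hx
    have hx' : x ∈ Ideal.span ((algebraMap D S) '' (J : Set D)) := hx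
    refine Submodule.span_induction ?_ ?_ ?_ ?_ hx'
    · rintro _ ⟨a, ha, rfl⟩
      rw [Algebra.algebraMap_eq_smul_one]
      exact Submodule.smul_mem_smul ha Submodule.mem_top
    · exact Submodule.zero_mem _
    · intro a b _ _ ha hb; exact Submodule.add_mem _ ha hb
    · intro r a _ ha
      refine Submodule.smul_induction_on ha ?_ ?_
      · intro c hc n hn
        rw [smul_comm]
        exact Submodule.smul_mem_smul hc Submodule.mem_top
      · intro u v hu hv
        rw [smul_add]
        exact Submodule.add_mem _ hu hv
  have hx2 : x ∈ (J • (⊤ : Submodule D S) : Submodule D S) := hsub hx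
  refine Submodule.smul_induction_on hx2 ?_ ?_
  · intro c hc n _
    rw [map_smul, smul_eq_mul]
    exact Ideal.mul_mem_right _ _ hc
  · intro u v hu hv
    rw [map_add]
    exact Ideal.add_mem _ hu hv

/-- Descent of tight closure along a module-finite injective integral extension of domains. -/
lemma tc_descend {p : ℕ} (hp : p.Prime) {D S : Type*} [CommRing D] [CommRing S]
    [IsDomain D] [IsDomain S] [IsNoetherianRing D]
    (hchD : (p : D) = 0) (f : D →+* S) (hinj : Function.Injective f)
    (hfin : f.Finite) (hint : f.IsIntegral) {I : Ideal D} {y : D}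
    (hy : f y ∈ tightClosure p (Ideal.map f I)) : y ∈ tightClosure p I := by
  have hchS : (p : S) = 0 := by rw [← map_natCast f, hchD, map_zero]
  obtain ⟨d, hdpc, N, hN⟩ := hy
  have hd : d ≠ 0 := by rwa [pc_domain] at hdpc
  obtain ⟨r, hr, s, hrs⟩ := exists_dvd_of_integral f hd (hint d)
  letI : Algebra D S := f.toAlgebra
  haveI : Module.Finite D S := hfin
  have halg : algebraMap D S = f := rfl
  obtain ⟨φ, hφ⟩ := exists_functional (D := D) (S := S) (by rwa [halg])
  refine ⟨r * φ 1, ?_, N, fun e he => ?_⟩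
  · rw [pc_domain]
    exact mul_ne_zero hr hφ
  · have h1 : d * (f y) ^ p ^ e ∈ (Ideal.map f I).frobeniusPower (p ^ e) := hN e he
    have h2 : f (r * y ^ p ^ e) = s * (d * (f y) ^ p ^ e) := by
      rw [_root_.map_mul, map_pow, hrs]; ring
    have h3 : f (r * y ^ p ^ e) ∈ (Ideal.map f I).frobeniusPower (p ^ e) := by
      rw [h2]; exact Ideal.mul_mem_left _ _ h1
    rw [frob_map_eq hp hchS f I e] at h3
    have h5 : φ (f (r * y ^ p ^ e)) ∈ I.frobeniusPower (p ^ e) := by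
      refine functional_map_mem φ _ ?_
      rwa [halg]
    have h6 : φ (f (r * y ^ p ^ e)) = r * y ^ p ^ e * φ 1 := by
      rw [← halg, Algebra.algebraMap_eq_smul_one, map_smul, smul_eq_mul]
    rw [h6] at h5
    have h7 : r * φ 1 * y ^ p ^ e = r * y ^ p ^ e * φ 1 := by ring
    rwa [h7]

end Descent
section Star

lemma unit_mem_pc {x : A} (hx : IsUnit x) : x ∈ primeComplement A := by
  intro P hP hmem
  exact hP.1.1.ne_top (Ideal.eq_top_of_isUnit_mem P hmem hx)

lemma star_lemma {p : ℕ} (hp : p.Prime) {R : Type} [CommRing R] [IsNoetherianRing R]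
    (hch : (p : R) = 0)
    (U : Submonoid R) {P : Ideal R} (hP : P ∈ minimalPrimes R)
    (hdisj : Disjoint (U : Set R) (P : Set R))
    {S : Type} [CommRing S] [IsDomain S] (f : (R ⧸ P) →+* S)
    (hfinj : Function.Injective f) (hffin : f.Finite) (hfint : f.IsIntegral)
    (hS : TightClosureCommutesWithLocalization p S)
    {I : Ideal R} {z : R}
    (hz : algebraMap R (Localization U) z ∈
      tightClosure p (Ideal.map (algebraMap R (Localization U)) I)) :
    ∃ v ∈ U, ∃ c ∉ P, ∃ N, ∀ e, N ≤ e →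
      c * (v * z) ^ p ^ e ∈ I.frobeniusPower (p ^ e) ⊔ P := by
  classical
  haveI hPprime : P.IsPrime := hP.1.1
  set L := Localization U with hL
  set π : R →+* R ⧸ P := Ideal.Quotient.mk P with hπ
  set g : R →+* S := f.comp π with hg
  set US : Submonoid S := U.map g with hUS
  set LS := Localization US with hLS
  haveI : IsLocalization US LS := Localization.isLocalization
  set αS : S →+* LS := algebraMap S LS with hαS
  set g' : R →+* LS := αS.comp g with hg'
  -- basic characteristics
  have hchD : (p : R ⧸ P) = 0 := by rw [← map_natCast π, hch, map_zero]
  have hchS : (p : S) = 0 := by rw [← map_natCast g, hch, map_zero]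
  have hchLS : (p : LS) = 0 := by rw [← map_natCast αS, hchS, map_zero]
  -- the localization of S is a domain
  have hUSnzd : US ≤ nonZeroDivisors S := by
    rintro _ ⟨u, huU, rfl⟩
    refine mem_nonZeroDivisors_of_ne_zero ?_
    intro h0
    have : π u = 0 := hfinj (by rwa [map_zero] : f (π u) = f 0)
    have huP : u ∈ P := Ideal.Quotient.eq_zero_iff_mem.1 this
    exact Set.disjoint_left.1 hdisj huU huP
  haveI : IsDomain LS := IsLocalization.isDomain_localization hUSnzd
  -- normalize the multiplier
  obtain ⟨c, hcpc, N, hN⟩ := hz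
  obtain ⟨⟨c₀, w⟩, hcw⟩ := IsLocalization.surj U c
  have hc₀pc : algebraMap R L c₀ ∈ primeComplement L := by
    rw [← hcw]
    exact mul_mem_pc hcpc (unit_mem_pc (IsLocalization.map_units L w))
  have hN' : ∀ e, N ≤ e → algebraMap R L c₀ * (algebraMap R L z) ^ p ^ e ∈
      (Ideal.map (algebraMap R L) I).frobeniusPower (p ^ e) := by
    intro e he
    rw [← hcw, mul_comm c, mul_assoc]
    exact Ideal.mul_mem_left _ _ (hN e he)
  -- the induced map ψ : L → LS
  have hunits : ∀ u : U, IsUnit (g' u) := by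
    intro u
    exact IsLocalization.map_units (M := US) LS ⟨g u, show g u ∈ US from Submonoid.mem_map_of_mem (g : R →* S) u.2⟩
  set ψ : L →+* LS := IsLocalization.lift hunits with hψ
  have hψcomp : ψ.comp (algebraMap R L) = g' := IsLocalization.lift_comp hunits
  have hψalg : ∀ x : R, ψ (algebraMap R L x) = g' x := fun x => by
    rw [← hψcomp]; rfl
  -- multiplier survives in LS
  have hg'c₀ : g' c₀ ∈ primeComplement LS := by
    rw [pc_domain]
    intro h0
    have : αS (g c₀) = 0 := h0
    rw [IsLocalization.map_eq_zero_iff US LS] at this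
    obtain ⟨⟨_, u, huU, rfl⟩, hm⟩ := this
    have : g (u * c₀) = 0 := by rw [_root_.map_mul]; exact hm
    have : π (u * c₀) = 0 := hfinj (by rwa [map_zero] : f (π (u * c₀)) = f 0)
    have hmemP : u * c₀ ∈ P := Ideal.Quotient.eq_zero_iff_mem.1 this
    rcases hPprime.mem_or_mem hmemP with h | h
    · exact Set.disjoint_left.1 hdisj huU h
    · exact hc₀pc _ (map_minimalPrime U hP hdisj) (Ideal.mem_map_of_mem _ h)
  -- push the tight closure condition into LS
  have hzLS : g' z ∈ tightClosure p (Ideal.map g' I) := by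
    refine ⟨g' c₀, hg'c₀, N, fun e he => ?_⟩
    have h1 := Ideal.mem_map_of_mem ψ (hN' e he)
    rw [_root_.map_mul, map_pow, hψalg, hψalg] at h1
    have h2 := map_frob_le ψ (Ideal.map (algebraMap R L) I) (p ^ e) h1
    rwa [Ideal.map_map, hψcomp] at h2
  -- apply the hypothesis on S
  have hmapeq : Ideal.map g' I = Ideal.map αS (Ideal.map g I) := by
    rw [Ideal.map_map]
  rw [hmapeq] at hzLS
  have hzset : (g' z : LS) ∈ (Ideal.map αS
      (Ideal.span (tightClosure p (Ideal.map g I))) : Set LS) := by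
    rw [hS (Ideal.map g I) US]
    exact hzLS
  have : αS (g z) ∈ Ideal.map αS (Ideal.span (tightClosure p (Ideal.map g I))) := hzset
  obtain ⟨uS, huS, hmem⟩ := mem_map_loc US this
  obtain ⟨v, hvU, rfl⟩ := huS
  have hgvz : g (v * z) ∈ tightClosure p (Ideal.map g I) := by
    have : g v * g z ∈ (Ideal.span (tightClosure p (Ideal.map g I)) : Set S) := hmem
    rw [tc_span hp hchS] at this
    rwa [_root_.map_mul]
  -- descend to R/P
  haveI : IsDomain (R ⧸ P) := Ideal.Quotient.isDomain P
  have hmapeq2 : Ideal.map g I = Ideal.map f (Ideal.map π I) := by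
    rw [Ideal.map_map, hg]
  rw [hmapeq2] at hgvz
  have hdesc : π (v * z) ∈ tightClosure p (Ideal.map π I) :=
    tc_descend hp hchD f hfinj hffin hfint hgvz
  obtain ⟨cbar, hcbarpc, N₂, hN₂⟩ := hdesc
  obtain ⟨c, rfl⟩ := Ideal.Quotient.mk_surjective cbar
  have hcP : c ∉ P := by
    intro hcP
    have : π c = 0 := Ideal.Quotient.eq_zero_iff_mem.2 hcP
    rw [pc_domain] at hcbarpc
    exact hcbarpc this
  refine ⟨v, hvU, c, hcP, N₂, fun e he => ?_⟩
  have h1 := hN₂ e he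
  rw [frob_map_eq hp hchD π I e] at h1
  have h2 : π (c * (v * z) ^ p ^ e) ∈ Ideal.map π (I.frobeniusPower (p ^ e)) := by
    rwa [_root_.map_mul, map_pow]
  rw [Ideal.mem_map_iff_of_surjective π Ideal.Quotient.mk_surjective] at h2
  obtain ⟨x, hx, hxeq⟩ := h2
  have hdiff : c * (v * z) ^ p ^ e - x ∈ P := by
    have : π (c * (v * z) ^ p ^ e - x) = 0 := by rw [map_sub, hxeq, sub_self]
    exact Ideal.Quotient.eq_zero_iff_mem.1 this
  have : c * (v * z) ^ p ^ e = x + (c * (v * z) ^ p ^ e - x) := by ring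
  rw [this]
  exact Submodule.add_mem_sup hx hdiff

end Star
section Glue

lemma glue {p : ℕ} (hp : p.Prime) {R : Type} [CommRing R] [IsNoetherianRing R]
    (hch : (p : R) = 0) (U : Submonoid R) {I : Ideal R} {z : R}
    (hstar : ∀ P ∈ minimalPrimes R, ∃ v ∈ U, ∃ c ∉ P, ∃ N : ℕ, ∀ e, N ≤ e →
      c * (v * z) ^ p ^ e ∈ I.frobeniusPower (p ^ e) ⊔ P) :
    ∃ v ∈ U, v * z ∈ tightClosure p I := by
  classical
  rcases subsingleton_or_nontrivial R with hs | hn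
  · exact ⟨1, U.one_mem, (Subsingleton.elim (0 : R) (1 * z)) ▸ tc_zero hp I⟩
  set s : Finset (Ideal R) := (minimalPrimes.finite_of_isNoetherianRing R).toFinset with hs
  have hmem_s : ∀ P : Ideal R, P ∈ s ↔ P ∈ minimalPrimes R := fun P =>
    Set.Finite.mem_toFinset _
  have mp_of : ∀ P : {x // x ∈ s}, (P : Ideal R) ∈ minimalPrimes R := fun P =>
    (hmem_s P.1).1 P.2
  have hprime_of : ∀ P : {x // x ∈ s}, (P : Ideal R).IsPrime := fun P => (mp_of P).1.1
  -- choose the data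
  choose vf hvf cf hcf Nf hNf using fun P : {x // x ∈ s} => hstar P.1 (mp_of P)
  set V : R := ∏ P ∈ s.attach, vf P with hV
  have hVU : V ∈ U := Submonoid.prod_mem U fun P _ => hvf P
  set y : R := V * z with hy
  -- each multiplier works for y
  have hy_P : ∀ P : {x // x ∈ s}, ∀ e, Nf P ≤ e →
      cf P * y ^ p ^ e ∈ I.frobeniusPower (p ^ e) ⊔ (P : Ideal R) := by
    intro P e he
    have hsplit : V = vf P * ∏ Q ∈ s.attach.erase P, vf Q :=
      (Finset.mul_prod_erase s.attach vf (Finset.mem_attach s P)).symm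
    have heq : cf P * y ^ p ^ e =
        (∏ Q ∈ s.attach.erase P, vf Q) ^ p ^ e * (cf P * (vf P * z) ^ p ^ e) := by
      rw [hy, hsplit]; ring
    rw [heq]
    exact Ideal.mul_mem_left _ _ (hNf P e he)
  -- separating elements
  have hd : ∀ P : {x // x ∈ s}, ∃ d : R,
      d ∈ ∏ Q ∈ s.attach.erase P, (Q : Ideal R) ∧ d ∉ (P : Ideal R) := by
    intro P
    have hnle : ¬ (∏ Q ∈ s.attach.erase P, (Q : Ideal R)) ≤ (P : Ideal R) := by
      intro hle
      obtain ⟨Q, hQer, hQle⟩ := (Ideal.IsPrime.prod_le (hprime_of P)).1 hle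
      have hQP : (Q : Ideal R) ≠ (P : Ideal R) := by
        intro hQP
        exact (Finset.ne_of_mem_erase hQer) (Subtype.ext hQP)
      have : (P : Ideal R) ≤ Q := (mp_of P).2 ⟨hprime_of Q, bot_le⟩ hQle
      exact hQP (le_antisymm hQle this)
    obtain ⟨d, hd1, hd2⟩ := SetLike.not_le_iff_exists.1 hnle
    exact ⟨d, hd1, hd2⟩
  choose df hdf1 hdf2 using hd
  set c : R := ∑ P ∈ s.attach, df P * cf P with hc
  -- c is in the prime complement
  have hcpc : c ∈ primeComplement R := by
    intro P₀ hP₀mem hP₀c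
    have hP₀s : P₀ ∈ s := (hmem_s P₀).2 hP₀mem
    set P₀' : {x // x ∈ s} := ⟨P₀, hP₀s⟩ with hP₀'
    have hrest : ∑ Q ∈ s.attach.erase P₀', df Q * cf Q ∈ P₀ := by
      refine Ideal.sum_mem _ fun Q hQ => ?_
      have hQP₀ : P₀' ∈ s.attach.erase Q := by
        rw [Finset.mem_erase]
        exact ⟨(Finset.ne_of_mem_erase hQ).symm, Finset.mem_attach _ _⟩
      have hle : (∏ Q' ∈ s.attach.erase Q, (Q' : Ideal R)) ≤ P₀ := by
        calc (∏ Q' ∈ s.attach.erase Q, (Q' : Ideal R))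
            = (∏ Q' ∈ (s.attach.erase Q).erase P₀', (Q' : Ideal R)) * P₀ := by
              rw [Finset.prod_erase_mul _ _ hQP₀]
          _ ≤ P₀ := Ideal.mul_le_right
      exact Ideal.mul_mem_right _ _ (hle (hdf1 Q))
    have hsum : df P₀' * cf P₀' + ∑ Q ∈ s.attach.erase P₀', df Q * cf Q = c :=
      Finset.add_sum_erase _ (fun Q => df Q * cf Q) (Finset.mem_attach s P₀')
    have hterm : df P₀' * cf P₀' ∈ P₀ := by
      have : df P₀' * cf P₀' = c - ∑ Q ∈ s.attach.erase P₀', df Q * cf Q := by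
        rw [← hsum]; ring
      rw [this]
      exact Ideal.sub_mem _ hP₀c hrest
    rcases (hP₀mem.1.1.mem_or_mem hterm) with h | h
    · exact hdf2 P₀' h
    · exact hcf P₀' h
  -- the combined membership, with nilpotent error
  set K : Ideal R := ∏ P ∈ s.attach, (P : Ideal R) with hK
  set N₀ : ℕ := ∑ P ∈ s.attach, Nf P with hN₀
  have hcy : ∀ e, N₀ ≤ e → c * y ^ p ^ e ∈ I.frobeniusPower (p ^ e) ⊔ K := by
    intro e he
    have : c * y ^ p ^ e = ∑ P ∈ s.attach, df P * (cf P * y ^ p ^ e) := by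
      rw [hc, Finset.sum_mul]
      exact Finset.sum_congr rfl fun P _ => by ring
    rw [this]
    refine Ideal.sum_mem _ fun P _ => ?_
    have hNe : Nf P ≤ e := le_trans (Finset.single_le_sum (fun Q _ => Nat.zero_le _)
      (Finset.mem_attach s P)) he
    obtain ⟨a, ha, b, hb, hab⟩ := Submodule.mem_sup.1 (hy_P P e hNe)
    have : df P * (cf P * y ^ p ^ e) = df P * a + df P * b := by rw [← hab]; ring
    rw [this]
    refine Submodule.add_mem _ ?_ ?_
    · exact Ideal.mem_sup_left (Ideal.mul_mem_left _ _ ha)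
    · refine Ideal.mem_sup_right ?_
      have : df P * b ∈ (∏ Q ∈ s.attach.erase P, (Q : Ideal R)) * (P : Ideal R) :=
        Ideal.mul_mem_mul (hdf1 P) hb
      rwa [Finset.prod_erase_mul _ _ (Finset.mem_attach s P)] at this
  -- K is nilpotent
  have hKnil : K ≤ nilradical R := by
    rw [nilradical_eq_sInf]
    refine le_sInf fun Q hQ => ?_
    haveI : Q.IsPrime := hQ
    obtain ⟨P₀, hP₀mem, hP₀le⟩ := Ideal.exists_minimalPrimes_le (I := ⊥) (J := Q) bot_le
    have hP₀s : P₀ ∈ s := (hmem_s P₀).2 hP₀mem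
    calc K ≤ P₀ := by
          rw [hK, ← Finset.prod_erase_mul _ _ (Finset.mem_attach s ⟨P₀, hP₀s⟩)]
          exact Ideal.mul_le_right
      _ ≤ Q := hP₀le
  obtain ⟨m, hm⟩ := IsNoetherianRing.isNilpotent_nilradical R
  have hm' : nilradical R ^ (m + 1) = ⊥ := by
    rw [pow_succ, hm]
    simp
  have hKm : K ^ (m + 1) = ⊥ := by
    refine le_antisymm ?_ bot_le
    calc K ^ (m + 1) ≤ nilradical R ^ (m + 1) := Ideal.pow_right_mono hKnil _
      _ = ⊥ := hm'
  -- choose e' with m + 1 ≤ p ^ e'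
  set e' : ℕ := m + 1 with he'
  have hpe' : m + 1 ≤ p ^ e' := le_of_lt (Nat.lt_pow_self hp.one_lt)
  refine ⟨V, hVU, c ^ p ^ e', pow_mem_pc hcpc _, N₀ + e', fun e he => ?_⟩
  set e'' : ℕ := e - e' with he''
  have heq : e'' + e' = e := by omega
  have he''N : N₀ ≤ e'' := by omega
  have hx : c * y ^ p ^ e'' ∈ I.frobeniusPower (p ^ e'') ⊔ K := hcy e'' he''N
  have hx2 : (c * y ^ p ^ e'') ^ p ^ e' ∈
      (I.frobeniusPower (p ^ e'') ⊔ K).frobeniusPower (p ^ e') := pow_mem_frob hx _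
  have hle : (I.frobeniusPower (p ^ e'') ⊔ K).frobeniusPower (p ^ e') ≤
      I.frobeniusPower (p ^ e) := by
    refine le_trans (frob_sup_le hp hch _ _ _) ?_
    refine sup_le ?_ ?_
    · refine le_trans (frob_frob_le hp hch I e'' e') ?_
      rw [heq]
    · refine le_trans (frob_le_pow K _) ?_
      have h1 : K ^ (p ^ e') ≤ K ^ (m + 1) := Ideal.pow_le_pow_right hpe'
      rw [hKm] at h1
      exact le_trans h1 bot_le
  have hx3 : (c * y ^ p ^ e'') ^ p ^ e' = c ^ p ^ e' * y ^ p ^ e := by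
    rw [mul_pow, ← pow_mul, ← pow_add, heq]
  rw [← hx3]
  exact hle hx2

end Glue
/-- **Theorem.** If for each minimal prime `P` of `R`, the domain `R/P` has a
module-finite integral extension domain in which tight closure commutes with
localization, then tight closure commutes with localization in `R`. -/
theorem tightClosure_commutes_localization_of_quotients_have_finite_extension
    (p : ℕ) [Fact p.Prime] (R : Type) [CommRing R] [IsNoetherianRing R] [CharP R p]
    (h : ∀ P ∈ minimalPrimes R,
      ∃ (S : Type) (_ : CommRing S) (_ : IsDomain S) (f : (R ⧸ P) →+* S),
        Function.Injective f ∧ f.Finite ∧ f.IsIntegral ∧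
          TightClosureCommutesWithLocalization p S) :
    TightClosureCommutesWithLocalization p R := by
  intro I U
  have hp : p.Prime := Fact.out
  have hchR : (p : R) = 0 := CharP.cast_eq_zero R p
  have hchL : (p : Localization U) = 0 := by
    rw [← map_natCast (algebraMap R (Localization U)), hchR, map_zero]
  apply Set.Subset.antisymm
  · -- easy inclusion: persistence
    intro ζ hζ
    have hζ' : ζ ∈ Ideal.map (algebraMap R (Localization U)) (Ideal.span (tightClosure p I)) := hζ
    have hle : Ideal.map (algebraMap R (Localization U)) (Ideal.span (tightClosure p I)) ≤
        Ideal.span (tightClosure p (Ideal.map (algebraMap R (Localization U)) I)) := by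
      rw [Ideal.map_le_iff_le_comap]
      refine Ideal.span_le.2 fun w hw => ?_
      exact Ideal.subset_span (tc_map (algebraMap R (Localization U))
        (fun c hc => pc_map_pc U hc) hw)
    have hmem := hle hζ'
    rw [← tc_span hp hchL (Ideal.map (algebraMap R (Localization U)) I)]
    exact hmem
  · -- hard inclusion
    intro ζ hζ
    obtain ⟨⟨x, u⟩, hxu⟩ := IsLocalization.surj U ζ
    have hx : algebraMap R (Localization U) x ∈
        tightClosure p (Ideal.map (algebraMap R (Localization U)) I) := by
      rw [← hxu, mul_comm]
      exact tc_smul _ hζ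
    have hstar : ∀ P ∈ minimalPrimes R, ∃ v ∈ U, ∃ c ∉ P, ∃ N : ℕ, ∀ e, N ≤ e →
        c * (v * x) ^ p ^ e ∈ I.frobeniusPower (p ^ e) ⊔ P := by
      intro P hPmem
      by_cases hdisj : Disjoint (U : Set R) (P : Set R)
      · obtain ⟨S, _, _, f, hfinj, hffin, hfint, hS⟩ := h P hPmem
        exact star_lemma hp hchR U hPmem hdisj f hfinj hffin hfint hS hx
      · rw [Set.not_disjoint_iff] at hdisj
        obtain ⟨u₀, hu₀U, hu₀P⟩ := hdisj
        refine ⟨u₀, hu₀U, 1, fun h1 => hPmem.1.1.ne_top ((Ideal.eq_top_iff_one P).2 h1),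
          0, fun e _ => ?_⟩
        rw [one_mul, mul_pow]
        refine Ideal.mem_sup_right ?_
        exact Ideal.mul_mem_right _ _
          (Ideal.pow_mem_of_mem P hu₀P _ (Nat.pow_pos hp.pos))
    obtain ⟨v, hvU, hvx⟩ := glue hp hchR U hstar
    -- wrap up: ζ = (algebraMap (u*v))⁻¹ * algebraMap (v*x)
    have h1 : algebraMap R (Localization U) (v * x) ∈
        Ideal.map (algebraMap R (Localization U)) (Ideal.span (tightClosure p I)) :=
      Ideal.mem_map_of_mem _ (Ideal.subset_span hvx)
    have hwU : (u : R) * v ∈ U := U.mul_mem u.2 hvU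
    have hunit : IsUnit (algebraMap R (Localization U) ((u : R) * v)) :=
      IsLocalization.map_units _ ⟨(u : R) * v, hwU⟩
    have hζeq : ζ = ↑hunit.unit⁻¹ * algebraMap R (Localization U) (v * x) := by
      rw [eq_comm, Units.inv_mul_eq_iff_eq_mul]
      have : (hunit.unit : Localization U) = algebraMap R (Localization U) ((u : R) * v) := rfl
      rw [this, _root_.map_mul, _root_.map_mul]
      linear_combination (-(algebraMap R (Localization U) v)) * hxu
    show ζ ∈ Ideal.map (algebraMap R (Localization U)) (Ideal.span (tightClosure p I))
    rw [hζeq]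
    exact Ideal.mul_mem_left _ _ h1
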